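/- For any equivalence class [g] ∈ Σ_G/~, the subspace I_{[g]} := L_{[g],1} ⊕ V_{[g]} satisfies [I_{[g]}, I_{[g]}] ⊆ I_{[g]}. -/
import Mathlib


open Submodule

section
variable {G : Type*} [CommGroup G]

/-- A chain connection: a nonempty list `c` starting at `g`, with all entries in
`Main ∪ Other`, all proper partial products in `Main`, and total product `g'` or `g'⁻¹`. -/
def ChainConnected (Main Other : Set G) (g g' : G) : Prop :=
  ∃ c : List G, c ≠ [] ∧ c.head? = some g ∧
    (∀ k ∈ c, k ∈ Main ∪ Other) ∧
    (∀ i : ℕ, 0 < i → i < c.length → (c.take i).prod ∈ Main) ∧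
    (c.prod = g' ∨ c.prod = g'⁻¹)

end

/-- A `G`-graded Lie-Rinehart algebra `(L, A)` over a field `F`. -/
structure GradedLieRinehart (F : Type*) [Field F] (G : Type*) [CommGroup G] [DecidableEq G]
    (A : Type*) [CommRing A] [Algebra F A]
    (L : Type*) [LieRing L] [LieAlgebra F L] [Module A L] [IsScalarTower F A L] where
  ρ : L →ₗ[F] Derivation F A A
  ρ_smul : ∀ (a : A) (v : L) (b : A), ρ (a • v) b = a * ρ v b
  ρ_bracket : ∀ v w : L, ρ ⁅v, w⁆ = ⁅ρ v, ρ w⁆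
  leibniz : ∀ (v w : L) (a : A), ⁅v, a • w⁆ = a • ⁅v, w⁆ + (ρ v a) • w
  𝓛 : G → Submodule F L
  𝓐 : G → Submodule F A
  internalL : DirectSum.IsInternal 𝓛
  internalA : DirectSum.IsInternal 𝓐
  bracket_mem : ∀ {g h : G} {v w : L}, v ∈ 𝓛 g → w ∈ 𝓛 h → ⁅v, w⁆ ∈ 𝓛 (g * h)
  mul_mem : ∀ {g h : G} {a b : A}, a ∈ 𝓐 g → b ∈ 𝓐 h → a * b ∈ 𝓐 (g * h)
  smul_mem : ∀ {h g : G} {a : A} {v : L}, a ∈ 𝓐 h → v ∈ 𝓛 g → a • v ∈ 𝓛 (h * g)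
  rho_mem : ∀ {g h : G} {v : L} {a : A}, v ∈ 𝓛 g → a ∈ 𝓐 h → ρ v a ∈ 𝓐 (g * h)

namespace GradedLieRinehart

variable {F : Type*} [Field F] {G : Type*} [CommGroup G] [DecidableEq G]
  {A : Type*} [CommRing A] [Algebra F A]
  {L : Type*} [LieRing L] [LieAlgebra F L] [Module A L] [IsScalarTower F A L]
variable (𝔏 : GradedLieRinehart F G A L)

/-- The support `Σ_G` of the grading of `L`. -/
def SuppL : Set G := {g | g ≠ 1 ∧ 𝔏.𝓛 g ≠ ⊥}

/-- The support `Λ_G` of the grading of `A`. -/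
def SuppA : Set G := {g | g ≠ 1 ∧ 𝔏.𝓐 g ≠ ⊥}

/-- `Σ_G^± = Σ_G ∪ Σ_G⁻¹`. -/
def Spm : Set G := {g | g ∈ 𝔏.SuppL ∨ g⁻¹ ∈ 𝔏.SuppL}

/-- `Λ_G^± = Λ_G ∪ Λ_G⁻¹`. -/
def Lpm : Set G := {g | g ∈ 𝔏.SuppA ∨ g⁻¹ ∈ 𝔏.SuppA}

/-- `g` is `Σ_G`-connected to `g'`. -/
def SigmaConnected (g g' : G) : Prop := ChainConnected 𝔏.Spm 𝔏.Lpm g g'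

/-- `g` is `Λ_G`-connected to `g'`. -/
def LambdaConnected (g g' : G) : Prop := ChainConnected (𝔏.Lpm ∪ 𝔏.Spm) (∅ : Set G) g g'

/-- The span of products `A_h • L_g`. -/
def smulSub (h g : G) : Submodule F L :=
  Submodule.span F {x | ∃ a ∈ 𝔏.𝓐 h, ∃ v ∈ 𝔏.𝓛 g, x = a • v}

/-- The span of brackets `[L_h, L_g]`. -/
def bracketSub (h g : G) : Submodule F L :=
  Submodule.span F {x | ∃ v ∈ 𝔏.𝓛 h, ∃ w ∈ 𝔏.𝓛 g, x = ⁅v, w⁆}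

/-- `L_{[g],1}`. -/
def L1class (g : G) : Submodule F L :=
  (⨆ g' ∈ {g' | g' ∈ 𝔏.SuppL ∧ 𝔏.SigmaConnected g g' ∧ g' ∈ 𝔏.SuppA}, 𝔏.smulSub g'⁻¹ g') ⊔
  (⨆ g' ∈ {g' | g' ∈ 𝔏.SuppL ∧ 𝔏.SigmaConnected g g'}, 𝔏.bracketSub g'⁻¹ g')

/-- `V_{[g]}`. -/
def Vclass (g : G) : Submodule F L :=
  ⨆ g' ∈ {g' | g' ∈ 𝔏.SuppL ∧ 𝔏.SigmaConnected g g'}, 𝔏.𝓛 g'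

/-- The ideal `I_{[g]} = L_{[g],1} ⊕ V_{[g]}` attached to the class of `g`. -/
def Iclass (g : G) : Submodule F L := 𝔏.L1class g ⊔ 𝔏.Vclass g

/-- `Σ_{g ∈ Σ_G ∩ Λ_G} A_{g⁻¹} L_g + Σ_{g ∈ Σ_G} [L_{g⁻¹}, L_g]`. -/
def L1full : Submodule F L :=
  (⨆ g ∈ 𝔏.SuppL ∩ 𝔏.SuppA, 𝔏.smulSub g⁻¹ g) ⊔ (⨆ g ∈ 𝔏.SuppL, 𝔏.bracketSub g⁻¹ g)

/-- An ideal of the Lie-Rinehart algebra `(L,A)`: a Lie ideal which is an `A`-submodule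
and satisfies `ρ(I)(A)L ⊆ I`. -/
def IsIdealL (I : Submodule F L) : Prop :=
  (∀ (x : L), ∀ y ∈ I, ⁅x, y⁆ ∈ I) ∧ (∀ (a : A), ∀ y ∈ I, a • y ∈ I) ∧
  (∀ v ∈ I, ∀ (a : A) (w : L), (𝔏.ρ v a) • w ∈ I)

/-- A graded submodule of `L`. -/
def IsGradedL (I : Submodule F L) : Prop := I = ⨆ k : G, I ⊓ 𝔏.𝓛 k

/-- A graded ideal of `(L,A)`. -/
def IsGradedIdealL (I : Submodule F L) : Prop := 𝔏.IsIdealL I ∧ 𝔏.IsGradedL I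

/-- `(L,A)` is gr-simple. -/
def GrSimpleL : Prop :=
  (∃ v w : L, ⁅v, w⁆ ≠ 0) ∧ (∃ a b : A, a * b ≠ 0) ∧ (∃ (a : A) (v : L), a • v ≠ 0) ∧
  ∀ I : Submodule F L, 𝔏.IsGradedIdealL I → I = ⊥ ∨ I = ⊤ ∨ I = LinearMap.ker 𝔏.ρ

/-- The span of products `A_h · A_g`. -/
def mulSub (h g : G) : Submodule F A :=
  Submodule.span F {x | ∃ a ∈ 𝔏.𝓐 h, ∃ b ∈ 𝔏.𝓐 g, x = a * b}

/-- The span of `ρ(L_h)(A_g)`. -/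
def rhoSub (h g : G) : Submodule F A :=
  Submodule.span F {x | ∃ v ∈ 𝔏.𝓛 h, ∃ a ∈ 𝔏.𝓐 g, x = 𝔏.ρ v a}

/-- `A_{[g],1}`. -/
def A1class (g : G) : Submodule F A :=
  (⨆ g' ∈ {g' | g' ∈ 𝔏.SuppA ∧ 𝔏.LambdaConnected g g' ∧ g' ∈ 𝔏.SuppL}, 𝔏.rhoSub g'⁻¹ g') ⊔
  (⨆ g' ∈ {g' | g' ∈ 𝔏.SuppA ∧ 𝔏.LambdaConnected g g'}, 𝔏.mulSub g'⁻¹ g')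

/-- `A_{[g]}`. -/
def Aclass (g : G) : Submodule F A :=
  ⨆ g' ∈ {g' | g' ∈ 𝔏.SuppA ∧ 𝔏.LambdaConnected g g'}, 𝔏.𝓐 g'

/-- `𝒜_{[g]} = A_{[g],1} ⊕ A_{[g]}`. -/
def calA (g : G) : Submodule F A := 𝔏.A1class g ⊔ 𝔏.Aclass g

/-- `Σ_{g ∈ Λ_G ∩ Σ_G} ρ(L_{g⁻¹})(A_g) + Σ_{g ∈ Λ_G} A_{g⁻¹} A_g`. -/
def A1full : Submodule F A :=
  (⨆ g ∈ 𝔏.SuppA ∩ 𝔏.SuppL, 𝔏.rhoSub g⁻¹ g) ⊔ (⨆ g ∈ 𝔏.SuppA, 𝔏.mulSub g⁻¹ g)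

/-- An ideal of the commutative associative algebra `A`. -/
def IsIdealA (I : Submodule F A) : Prop := ∀ (a : A), ∀ x ∈ I, a * x ∈ I

/-- A graded submodule of `A`. -/
def IsGradedA (I : Submodule F A) : Prop := I = ⨆ k : G, I ⊓ 𝔏.𝓐 k

/-- A graded ideal of `A`. -/
def IsGradedIdealA (I : Submodule F A) : Prop := IsIdealA I ∧ 𝔏.IsGradedA I

/-- `A` is gr-simple. -/
def GrSimpleA : Prop :=
  (∃ a b : A, a * b ≠ 0) ∧
  ∀ I : Submodule F A, 𝔏.IsGradedIdealA I → I = ⊥ ∨ I = ⊤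

/-- The graded Lie-Rinehart algebra `(L,A)` is tight. -/
def Tight : Prop :=
  (∀ v : L, (∀ w : L, ⁅v, w⁆ = 0) → 𝔏.ρ v = 0 → v = 0) ∧
  (∀ v : L, (∀ a : A, a • v = 0) → v = 0) ∧
  (∀ a : A, (∀ b : A, a * b = 0) → a = 0) ∧
  Submodule.span F {x : A | ∃ b c : A, x = b * c} = ⊤ ∧
  Submodule.span F {x : L | ∃ (a : A) (w : L), x = a • w} = ⊤ ∧
  𝔏.𝓛 1 = 𝔏.L1full ∧ 𝔏.𝓐 1 = 𝔏.A1full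

/-- `(L,A)` is of maximal length. -/
def MaximalLength : Prop :=
  (∀ g ∈ 𝔏.SuppL, Module.rank F (𝔏.𝓛 g) = 1) ∧ (∀ k ∈ 𝔏.SuppA, Module.rank F (𝔏.𝓐 k) = 1)

/-- `(L,A)` is `G`-multiplicative. -/
def GMultiplicative : Prop :=
  (∀ g ∈ 𝔏.SuppL, ∀ h ∈ 𝔏.SuppL, g * h ∈ 𝔏.SuppL → ∃ v ∈ 𝔏.𝓛 g, ∃ w ∈ 𝔏.𝓛 h, ⁅v, w⁆ ≠ 0) ∧
  (∀ k ∈ 𝔏.SuppA, ∀ g ∈ 𝔏.SuppL, k * g ∈ 𝔏.SuppL → ∃ a ∈ 𝔏.𝓐 k, ∃ v ∈ 𝔏.𝓛 g, a • v ≠ 0) ∧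
  (∀ k ∈ 𝔏.SuppA, ∀ j ∈ 𝔏.SuppA, k * j ∈ 𝔏.SuppA → ∃ a ∈ 𝔏.𝓐 k, ∃ b ∈ 𝔏.𝓐 j, a * b ≠ 0)

/-- A gr-simple ideal of `(L,A)`: a graded ideal with nonzero bracket whose only graded
ideals of `L` contained in it are `0`, itself and its intersection with `Ker ρ`. -/
def GrSimpleIdealL (I : Submodule F L) : Prop :=
  𝔏.IsGradedIdealL I ∧ (∃ x ∈ I, ∃ y ∈ I, ⁅x, y⁆ ≠ 0) ∧
  ∀ J : Submodule F L, 𝔏.IsGradedIdealL J → J ≤ I →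
    (J = ⊥ ∨ J = I ∨ J = LinearMap.ker 𝔏.ρ ⊓ I)

end GradedLieRinehart

open GradedLieRinehart

variable {F : Type*} [Field F] {G : Type*} [CommGroup G] [DecidableEq G]
  {A : Type*} [CommRing A] [Algebra F A]
  {L : Type*} [LieRing L] [LieAlgebra F L] [Module A L] [IsScalarTower F A L]

private lemma chain_extend {G : Type*} [CommGroup G] {Main Other : Set G} {g g' : G}
    (h : ChainConnected Main Other g g') (hg' : g' ∈ Main) (hg'i : g'⁻¹ ∈ Main)
    {k : G} (hk : k ∈ Main) (hki : k⁻¹ ∈ Main) :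
    ChainConnected Main Other g (g' * k) := by
  obtain ⟨c, hne, hhead, hmem, hpart, hprod⟩ := h
  rcases hprod with hp | hp
  · refine ⟨c ++ [k], by simp, ?_, ?_, ?_, ?_⟩
    · rw [List.head?_append_of_ne_nil _ hne]; exact hhead
    · intro x hx
      rcases List.mem_append.mp hx with h1 | h1
      · exact hmem x h1
      · simp only [List.mem_singleton] at h1; subst h1; exact Or.inl hk
    · intro i hi0 hilen
      simp only [List.length_append, List.length_singleton] at hilen
      rcases lt_or_eq_of_le (Nat.lt_succ_iff.mp hilen) with h1 | h1
      · rw [List.take_append_of_le_length (le_of_lt h1)]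
        exact hpart i hi0 h1
      · rw [h1, List.take_append_of_le_length le_rfl, List.take_length, hp]
        exact hg'
    · left; rw [List.prod_append, List.prod_singleton, hp]
  · refine ⟨c ++ [k⁻¹], by simp, ?_, ?_, ?_, ?_⟩
    · rw [List.head?_append_of_ne_nil _ hne]; exact hhead
    · intro x hx
      rcases List.mem_append.mp hx with h1 | h1
      · exact hmem x h1
      · simp only [List.mem_singleton] at h1; subst h1; exact Or.inl hki
    · intro i hi0 hilen
      simp only [List.length_append, List.length_singleton] at hilen
      rcases lt_or_eq_of_le (Nat.lt_succ_iff.mp hilen) with h1 | h1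
      · rw [List.take_append_of_le_length (le_of_lt h1)]
        exact hpart i hi0 h1
      · rw [h1, List.take_append_of_le_length le_rfl, List.take_length, hp]
        exact hg'i
    · right
      rw [List.prod_append, List.prod_singleton, hp, mul_inv_rev, mul_comm]

private lemma suppL_mem_Spm (𝔏 : GradedLieRinehart F G A L) {k : G} (hk : k ∈ 𝔏.SuppL) :
    k ∈ 𝔏.Spm := Or.inl hk

private lemma suppL_inv_mem_Spm (𝔏 : GradedLieRinehart F G A L) {k : G} (hk : k ∈ 𝔏.SuppL) :
    k⁻¹ ∈ 𝔏.Spm := Or.inr (by rwa [inv_inv])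

/-- Extension of a Σ-connection by a support element. -/
private lemma sigmaConnected_mul (𝔏 : GradedLieRinehart F G A L) {g g' k : G}
    (h : 𝔏.SigmaConnected g g') (hg' : g' ∈ 𝔏.SuppL) (hk : k ∈ 𝔏.SuppL) :
    𝔏.SigmaConnected g (g' * k) :=
  chain_extend h (suppL_mem_Spm 𝔏 hg') (suppL_inv_mem_Spm 𝔏 hg')
    (suppL_mem_Spm 𝔏 hk) (suppL_inv_mem_Spm 𝔏 hk)

private lemma L1class_le_L1 (𝔏 : GradedLieRinehart F G A L) (g : G) :
    𝔏.L1class g ≤ 𝔏.𝓛 1 := by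
  apply sup_le
  · refine iSup₂_le fun g' _ => ?_
    rw [smulSub, Submodule.span_le]
    rintro x ⟨a, ha, v, hv, rfl⟩
    have := 𝔏.smul_mem ha hv
    rwa [inv_mul_cancel] at this
  · refine iSup₂_le fun g' _ => ?_
    rw [bracketSub, Submodule.span_le]
    rintro x ⟨v, hv, w, hw, rfl⟩
    have := 𝔏.bracket_mem hv hw
    rwa [inv_mul_cancel] at this

/-- `[𝓛 1, L1class] ⊆ L1class`. -/
private lemma lie_mem_L1class (𝔏 : GradedLieRinehart F G A L) {g : G} {x : L}
    (hx : x ∈ 𝔏.𝓛 1) : ∀ y ∈ 𝔏.L1class g, ⁅x, y⁆ ∈ 𝔏.L1class g := by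
  have hle : 𝔏.L1class g ≤ Submodule.comap (LieAlgebra.ad F L x) (𝔏.L1class g) := by
    apply sup_le
    · refine iSup₂_le fun g' hg' => ?_
      rw [smulSub, Submodule.span_le]
      rintro z ⟨a, ha, v, hv, rfl⟩
      simp only [Set.mem_preimage, SetLike.mem_coe, Submodule.mem_comap, LieAlgebra.ad_apply]
      have hmem : ⁅x, a • v⁆ ∈ 𝔏.smulSub g'⁻¹ g' := by
        rw [𝔏.leibniz x v a]
        apply add_mem
        · exact Submodule.subset_span ⟨a, ha, ⁅x, v⁆, by simpa using 𝔏.bracket_mem hx hv, rfl⟩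
        · exact Submodule.subset_span ⟨𝔏.ρ x a, by simpa using 𝔏.rho_mem hx ha, v, hv, rfl⟩
      exact Submodule.mem_sup_left
        (Submodule.mem_iSup_of_mem g' (Submodule.mem_iSup_of_mem hg' hmem))
    · refine iSup₂_le fun g' hg' => ?_
      rw [bracketSub, Submodule.span_le]
      rintro z ⟨v, hv, w, hw, rfl⟩
      simp only [Set.mem_preimage, SetLike.mem_coe, Submodule.mem_comap, LieAlgebra.ad_apply]
      have hmem : ⁅x, ⁅v, w⁆⁆ ∈ 𝔏.bracketSub g'⁻¹ g' := by
        rw [leibniz_lie]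
        apply add_mem
        · exact Submodule.subset_span ⟨⁅x, v⁆, by simpa using 𝔏.bracket_mem hx hv, w, hw, rfl⟩
        · exact Submodule.subset_span ⟨v, hv, ⁅x, w⁆, by simpa using 𝔏.bracket_mem hx hw, rfl⟩
      exact Submodule.mem_sup_right
        (Submodule.mem_iSup_of_mem g' (Submodule.mem_iSup_of_mem hg' hmem))
  intro y hy
  simpa using hle hy

/-- `[𝓛 1, Vclass] ⊆ Vclass`. -/
private lemma lie_mem_Vclass (𝔏 : GradedLieRinehart F G A L) {g : G} {x : L}
    (hx : x ∈ 𝔏.𝓛 1) : ∀ y ∈ 𝔏.Vclass g, ⁅x, y⁆ ∈ 𝔏.Vclass g := by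
  have hle : 𝔏.Vclass g ≤ Submodule.comap (LieAlgebra.ad F L x) (𝔏.Vclass g) := by
    refine iSup₂_le fun g' hg' => ?_
    intro y hy
    simp only [Submodule.mem_comap, LieAlgebra.ad_apply]
    exact Submodule.mem_iSup_of_mem g' (Submodule.mem_iSup_of_mem hg'
      (by simpa using 𝔏.bracket_mem hx hy))
  intro y hy
  simpa using hle hy

/-- brackets of homogeneous elements of `Vclass` lie in `Iclass`. -/
private lemma lie_homog_mem_Iclass (𝔏 : GradedLieRinehart F G A L) {g g' g'' : G}
    (hg' : g' ∈ 𝔏.SuppL ∧ 𝔏.SigmaConnected g g')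
    (hg'' : g'' ∈ 𝔏.SuppL ∧ 𝔏.SigmaConnected g g'')
    {x y : L} (hx : x ∈ 𝔏.𝓛 g') (hy : y ∈ 𝔏.𝓛 g'') : ⁅x, y⁆ ∈ 𝔏.Iclass g := by
  by_cases hgg : g' * g'' = 1
  · have hg'eq : g''⁻¹ = g' := by
      rw [eq_comm, eq_inv_iff_mul_eq_one, hgg]
    have hmem : ⁅x, y⁆ ∈ 𝔏.bracketSub g''⁻¹ g'' :=
      Submodule.subset_span ⟨x, by rw [hg'eq]; exact hx, y, hy, rfl⟩
    exact Submodule.mem_sup_left (Submodule.mem_sup_right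
      (Submodule.mem_iSup_of_mem g'' (Submodule.mem_iSup_of_mem hg'' hmem)))
  · have hb : ⁅x, y⁆ ∈ 𝔏.𝓛 (g' * g'') := 𝔏.bracket_mem hx hy
    by_cases hbot : 𝔏.𝓛 (g' * g'') = ⊥
    · rw [hbot, Submodule.mem_bot] at hb
      rw [hb]; exact zero_mem _
    · have hS : g' * g'' ∈ 𝔏.SuppL := ⟨hgg, hbot⟩
      have hconn : 𝔏.SigmaConnected g (g' * g'') :=
        sigmaConnected_mul 𝔏 hg'.2 hg'.1 hg''.1
      exact Submodule.mem_sup_right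
        (Submodule.mem_iSup_of_mem (g' * g'') (Submodule.mem_iSup_of_mem ⟨hS, hconn⟩ hb))

/-- `[Vclass, Vclass] ⊆ Iclass`. -/
private lemma lie_Vclass_Vclass (𝔏 : GradedLieRinehart F G A L) {g : G} :
    ∀ x ∈ 𝔏.Vclass g, ∀ y ∈ 𝔏.Vclass g, ⁅x, y⁆ ∈ 𝔏.Iclass g := by
  intro x hx
  have h1 : ∀ g'' ∈ {g' | g' ∈ 𝔏.SuppL ∧ 𝔏.SigmaConnected g g'}, ∀ y ∈ 𝔏.𝓛 g'',
      ⁅x, y⁆ ∈ 𝔏.Iclass g := by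
    intro g'' hg'' y hy
    have hle : 𝔏.Vclass g ≤ Submodule.comap (LieAlgebra.ad F L y) (𝔏.Iclass g) := by
      refine iSup₂_le fun g' hg' => ?_
      intro x' hx'
      simp only [Submodule.mem_comap, LieAlgebra.ad_apply]
      exact lie_homog_mem_Iclass 𝔏 hg'' hg' hy hx'
    have : ⁅y, x⁆ ∈ 𝔏.Iclass g := by simpa using hle hx
    rw [← lie_skew]
    exact neg_mem this
  intro y hy
  have hle : 𝔏.Vclass g ≤ Submodule.comap (LieAlgebra.ad F L x) (𝔏.Iclass g) := by
    refine iSup₂_le fun g'' hg'' => ?_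
    intro y' hy'
    simp only [Submodule.mem_comap, LieAlgebra.ad_apply]
    exact h1 g'' hg'' y' hy'
  simpa using hle hy

/-- `[I_{[g]}, I_{[g]}] ⊆ I_{[g]}`. -/
theorem Iclass_bracket_self (𝔏 : GradedLieRinehart F G A L) {g : G} (hg : g ∈ 𝔏.SuppL) :
    ∀ x ∈ 𝔏.Iclass g, ∀ y ∈ 𝔏.Iclass g, ⁅x, y⁆ ∈ 𝔏.Iclass g := by
  intro x hx y hy
  rcases Submodule.mem_sup.mp hx with ⟨x1, hx1, x2, hx2, rfl⟩
  rcases Submodule.mem_sup.mp hy with ⟨y1, hy1, y2, hy2, rfl⟩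
  have hx1' : x1 ∈ 𝔏.𝓛 1 := L1class_le_L1 𝔏 g hx1
  have hy1' : y1 ∈ 𝔏.𝓛 1 := L1class_le_L1 𝔏 g hy1
  have t11 : ⁅x1, y1⁆ ∈ 𝔏.Iclass g :=
    Submodule.mem_sup_left (lie_mem_L1class 𝔏 hx1' y1 hy1)
  have t12 : ⁅x1, y2⁆ ∈ 𝔏.Iclass g :=
    Submodule.mem_sup_right (lie_mem_Vclass 𝔏 hx1' y2 hy2)
  have t21 : ⁅x2, y1⁆ ∈ 𝔏.Iclass g := by
    rw [← lie_skew]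
    exact neg_mem (Submodule.mem_sup_right (lie_mem_Vclass 𝔏 hy1' x2 hx2) :
      ⁅y1, x2⁆ ∈ 𝔏.Iclass g)
  have t22 : ⁅x2, y2⁆ ∈ 𝔏.Iclass g := lie_Vclass_Vclass 𝔏 x2 hx2 y2 hy2
  have : ⁅x1 + x2, y1 + y2⁆ = ⁅x1, y1⁆ + ⁅x1, y2⁆ + (⁅x2, y1⁆ + ⁅x2, y2⁆) := by
    rw [add_lie, lie_add, lie_add]
  rw [this]
  exact add_mem (add_mem t11 t12) (add_mem t21 t22)
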